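/- Let H be a separable complex Hilbert space and let P be a bounded idempotent operator on H. Then the operator J₀ := (2P - I)|2P - I|⁻¹ is a symmetry with J₀P ≥ 0, and it is the minimum of the set of all symmetries J with JP ≥ 0 in the Loewner partial order; that is, for every symmetry J with JP ≥ 0 one has J ≥ J₀. -/

import Mathlib

open ContinuousLinearMap

variable {H : Type*} [NormedAddCommGroup H] [InnerProductSpace ℂ H]
  [CompleteSpace H] [TopologicalSpace.SeparableSpace H]

/-- The absolute value `|A| = (A*A)^(1/2)` of a bounded operator. -/
noncomputable def absOp (A : H →L[ℂ] H) : H →L[ℂ] H := CFC.sqrt (star A * A)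

/-- A symmetry is a self-adjoint unitary: `J = J* = J⁻¹`. -/
def IsSymmetry (J : H →L[ℂ] H) : Prop := IsSelfAdjoint J ∧ J * J = 1

theorem stmt_13 (P : H →L[ℂ] H) (hP : P * P = P) :
    IsSymmetry (((2 : ℂ) • P - 1) * Ring.inverse (absOp ((2 : ℂ) • P - 1))) ∧
    ((((2 : ℂ) • P - 1) * Ring.inverse (absOp ((2 : ℂ) • P - 1))) * P).IsPositive ∧
    ∀ J, IsSymmetry J → (J * P).IsPositive →
      (J - ((2 : ℂ) • P - 1) * Ring.inverse (absOp ((2 : ℂ) • P - 1))).IsPositive := by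
  simp only [IsSymmetry, absOp]
  set T : H →L[ℂ] H := (2 : ℂ) • P - 1 with hT_def
  set D : H →L[ℂ] H := star T * T with hD_def
  set Di : H →L[ℂ] H := T * star T with hDi_def
  set nT : H →L[ℂ] H := CFC.sqrt D with hnT_def
  set iT : H →L[ℂ] H := Ring.inverse nT with hiT_def
  -- basic algebra
  have hTPe : T * P = P := by
    rw [hT_def, sub_mul, smul_mul_assoc, hP, one_mul]; module
  have h1 : T * T = 1 := by
    nth_rewrite 2 [hT_def]
    rw [mul_sub, mul_smul_comm, mul_one, hTPe, hT_def]; module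
  have hst1 : star T * star T = 1 := by rw [← star_mul, h1, star_one]
  have hD0 : 0 ≤ D := star_mul_self_nonneg T
  have hDi0 : 0 ≤ Di := by
    have := star_mul_self_nonneg (star T); rwa [star_star] at this
  have hDsa : star D = D := by rw [hD_def, star_mul, star_star]
  have hDisa : star Di = Di := by rw [hDi_def, star_mul, star_star]
  have hDDi : D * Di = 1 := by
    rw [hD_def, hDi_def, mul_assoc, ← mul_assoc T T, h1, one_mul, hst1]
  have hDiD : Di * D = 1 := by
    rw [hDi_def, hD_def, mul_assoc, ← mul_assoc (star T) (star T), hst1, one_mul, h1]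
  have hsq : nT * nT = D := CFC.sqrt_mul_sqrt_self D hD0
  have hnT0 : 0 ≤ nT := CFC.sqrt_nonneg D
  have hnTsa : star nT = nT := ((nonneg_iff_isPositive nT).mp hnT0).isSelfAdjoint.star_eq
  -- nT is a unit with inverse nT * Di
  have hu : nT * (nT * Di) = 1 := by rw [← mul_assoc, hsq, hDDi]
  have hu' : (Di * nT) * nT = 1 := by rw [mul_assoc, hsq, hDiD]
  have hcomm : Di * nT = nT * Di := by
    calc Di * nT = (Di * nT) * (nT * (nT * Di)) := by rw [hu, mul_one]
    _ = ((Di * nT) * nT) * (nT * Di) := by rw [← mul_assoc]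
    _ = nT * Di := by rw [hu', one_mul]
  have hu2 : (nT * Di) * nT = 1 := by rw [← hcomm]; exact hu'
  have hiT : iT = nT * Di := by
    rw [hiT_def, show nT = ((⟨nT, nT * Di, hu, hu2⟩ : (H →L[ℂ] H)ˣ) : H →L[ℂ] H) from rfl,
      Ring.inverse_unit]
    rfl
  have hnTiT : nT * iT = 1 := by rw [hiT]; exact hu
  have hiTnT : iT * nT = 1 := by rw [hiT]; exact hu2
  have hiTsa : star iT = iT := by rw [hiT, star_mul, hnTsa, hDisa, hcomm]
  have hiT0 : 0 ≤ iT := by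
    have h := star_left_conjugate_nonneg hnT0 iT
    rwa [hiTsa, hiTnT, one_mul] at h
  -- cancellation helpers
  have cTT : ∀ X : H →L[ℂ] H, T * (T * X) = X := fun X => by rw [← mul_assoc, h1, one_mul]
  have cIN : ∀ X : H →L[ℂ] H, iT * (nT * X) = X := fun X => by rw [← mul_assoc, hiTnT, one_mul]
  have cNI : ∀ X : H →L[ℂ] H, nT * (iT * X) = X := fun X => by rw [← mul_assoc, hnTiT, one_mul]
  -- star T identities
  have hTst : star T = D * T := by
    calc star T = star T * (T * T) := by rw [h1, mul_one]
    _ = D * T := by rw [← mul_assoc, ← hD_def]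
  have hTst2 : star T = T * Di := by
    calc star T = (T * T) * star T := by rw [h1, one_mul]
    _ = T * Di := by rw [mul_assoc, ← hDi_def]
  have hT2 : T = star T * D := by
    have h := congrArg star hTst
    rwa [star_star, star_mul, hDsa] at h
  have hDiT : D * iT = nT := by rw [← hsq, mul_assoc, hnTiT, mul_one]
  have hiTD : iT * D = nT := by rw [← hsq, ← mul_assoc, hiTnT, one_mul]
  -- the operator S = T nT T is the positive square root of Di, hence equals iT
  have hS0 : 0 ≤ T * (nT * T) := by
    have h := star_left_conjugate_nonneg hnT0 (nT * T)
    rw [star_mul, hnTsa] at h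
    have e : ((star T * nT) * nT) * (nT * T) = T * (nT * T) := by
      calc ((star T * nT) * nT) * (nT * T) = (star T * D) * (nT * T) := by
            rw [mul_assoc (star T), hsq]
      _ = T * (nT * T) := by rw [← hT2]
    rwa [e] at h
  have hSsq : (T * (nT * T)) * (T * (nT * T)) = Di := by
    calc (T * (nT * T)) * (T * (nT * T)) = T * (nT * (T * (T * (nT * T)))) := by
          simp only [mul_assoc]
    _ = T * (nT * (nT * T)) := by rw [cTT]
    _ = T * (D * T) := by rw [← mul_assoc nT nT, hsq]
    _ = T * star T := by rw [← hTst]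
    _ = Di := by rw [← hDi_def]
  have hiT2 : iT * iT = Di := by
    rw [hiT]
    calc (nT * Di) * (nT * Di) = nT * ((Di * nT) * Di) := by simp only [mul_assoc]
    _ = nT * ((nT * Di) * Di) := by rw [hcomm]
    _ = (nT * nT) * (Di * Di) := by simp only [mul_assoc]
    _ = D * (Di * Di) := by rw [hsq]
    _ = Di := by rw [← mul_assoc, hDDi, one_mul]
  have hS : T * (nT * T) = iT :=
    (CFC.sqrt_unique hSsq hS0).symm.trans (CFC.sqrt_unique hiT2 hiT0)
  have hkey : T * iT = nT * T := by rw [← hS, cTT]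
  have hkey2 : iT * T = T * nT := by
    rw [← hS]
    calc (T * (nT * T)) * T = T * (nT * (T * T)) := by simp only [mul_assoc]
    _ = T * nT := by rw [h1, mul_one]
  -- J₀ = T * iT is a symmetry
  have hJ0sa : star (T * iT) = T * iT := by
    rw [star_mul, hiTsa, hTst2, ← mul_assoc, hkey2, mul_assoc, ← hiT]
  have hJ0sq : (T * iT) * (T * iT) = 1 := by
    rw [hkey]
    calc (nT * T) * (nT * T) = nT * ((T * nT) * T) := by simp only [mul_assoc]
    _ = nT * ((iT * T) * T) := by rw [← hkey2]
    _ = nT * (iT * (T * T)) := by rw [mul_assoc]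
    _ = 1 := by rw [h1, mul_one, hnTiT]
  -- J₀ P = nT P is positive
  have hPdef : (2 : ℂ) • P = T + 1 := by rw [hT_def]; module
  have hstT : star T = (2 : ℂ) • star P - 1 := by
    rw [hT_def, star_sub, star_smul, star_one]
    norm_num
  have hstP2 : (2 : ℂ) • (star P) = star T + 1 := by rw [hstT]; module
  have h2 : star T * nT = nT * T := by
    rw [hTst, mul_assoc, ← hkey2, ← mul_assoc, hDiT]
  have hstPnT : star P * nT = nT * P := by
    refine smul_right_injective (H →L[ℂ] H) (two_ne_zero (α := ℂ)) ?_
    calc (2 : ℂ) • (star P * nT) = ((2 : ℂ) • star P) * nT := by rw [smul_mul_assoc]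
    _ = star T * nT + nT := by rw [hstP2, add_mul, one_mul]
    _ = nT * T + nT := by rw [h2]
    _ = nT * (T + 1) := by rw [mul_add, mul_one]
    _ = nT * ((2 : ℂ) • P) := by rw [hPdef]
    _ = (2 : ℂ) • (nT * P) := by rw [mul_smul_comm]
  have h0 : 0 ≤ nT * P := by
    have h := star_left_conjugate_nonneg hnT0 P
    rwa [hstPnT, mul_assoc, hP] at h
  refine ⟨⟨hJ0sa, hJ0sq⟩, ?_, ?_⟩
  · rw [← nonneg_iff_isPositive, hkey, mul_assoc, hTPe]
    exact h0
  · -- minimality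
    rintro J ⟨hJsa, hJ2⟩ hJP
    have cJJ : ∀ X : H →L[ℂ] H, J * (J * X) = X := fun X => by rw [← mul_assoc, hJ2, one_mul]
    have hJP0 : 0 ≤ J * P := (nonneg_iff_isPositive _).mpr hJP
    have hJPsa : star P * J = J * P := by
      have h := hJP.isSelfAdjoint.star_eq
      rwa [star_mul, hJsa.star_eq] at h
    set A : H →L[ℂ] H := J * T with hA_def
    have hAsa : star A = A := by
      rw [hA_def, star_mul, hJsa.star_eq, hstT, sub_mul, smul_mul_assoc, hJPsa, one_mul,
        ← mul_smul_comm, hT_def, mul_sub, mul_one]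
    have hA2 : A * A = D := by
      calc A * A = star A * A := by rw [hAsa]
      _ = star T * (J * (J * T)) := by rw [hA_def, star_mul, hJsa.star_eq]; simp only [mul_assoc]
      _ = D := by rw [cJJ, ← hD_def]
    have cAA : ∀ X : H →L[ℂ] H, A * (A * X) = D * X := fun X => by rw [← mul_assoc, hA2]
    have hC0 : 0 ≤ A * (iT * A) := by
      have h := star_left_conjugate_nonneg hiT0 A
      rwa [hAsa, mul_assoc] at h
    have hC2 : (A * (iT * A)) * (A * (iT * A)) = D := by
      calc (A * (iT * A)) * (A * (iT * A)) = A * (iT * (A * (A * (iT * A)))) := by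
            simp only [mul_assoc]
      _ = A * (iT * (D * (iT * A))) := by rw [cAA]
      _ = A * ((iT * D) * (iT * A)) := by rw [← mul_assoc iT D]
      _ = A * A := by rw [hiTD, cNI]
      _ = D := hA2
    have hCD : nT = A * (iT * A) := by rw [hnT_def]; exact CFC.sqrt_unique hC2 hC0
    have hAnT : nT * A = A * nT := by
      conv_lhs => rw [hCD]
      calc (A * (iT * A)) * A = A * (iT * (A * A)) := by simp only [mul_assoc]
      _ = A * nT := by rw [hA2, hiTD]
    have hAiT : iT * A = A * iT := by
      calc iT * A = iT * ((A * nT) * iT) := by rw [mul_assoc, hnTiT, mul_one]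
      _ = iT * ((nT * A) * iT) := by rw [hAnT]
      _ = (iT * nT) * (A * iT) := by simp only [mul_assoc]
      _ = A * iT := by rw [hiTnT, one_mul]
    set V : H →L[ℂ] H := A * iT with hV_def
    have hVsa : star V = V := by rw [hV_def, star_mul, hiTsa, hAsa, hAiT]
    have hV2 : V * V = 1 := by
      rw [hV_def]
      calc (A * iT) * (A * iT) = A * ((iT * A) * iT) := by simp only [mul_assoc]
      _ = A * ((A * iT) * iT) := by rw [hAiT]
      _ = A * (A * (iT * iT)) := by simp only [mul_assoc]
      _ = D * (iT * iT) := by rw [cAA]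
      _ = 1 := by rw [hiT2, hDDi]
    have hVnT : V * nT = A := by rw [hV_def, mul_assoc, hiTnT, mul_one]
    have hnTV : nT * V = A := by
      rw [hV_def, ← mul_assoc, hAnT, mul_assoc, hnTiT, mul_one]
    have eVR : V * (nT * P) = J * P := by
      rw [hV_def, mul_assoc, cIN, hA_def, mul_assoc, hTPe]
    have hRsa : star (nT * P) = nT * P := by rw [star_mul, hnTsa, hstPnT]
    have hRV : (nT * P) * V = V * (nT * P) := by
      calc (nT * P) * V = star (V * (nT * P)) := by rw [star_mul, hVsa, hRsa]
      _ = star (J * P) := by rw [eVR]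
      _ = J * P := hJP.isSelfAdjoint.star_eq
      _ = V * (nT * P) := eVR.symm
    have hPV : P * V = V * P := by
      have e2 : nT * (P * V) = nT * (V * P) := by
        calc nT * (P * V) = (nT * P) * V := by rw [mul_assoc]
        _ = V * (nT * P) := hRV
        _ = (V * nT) * P := by rw [← mul_assoc]
        _ = (nT * V) * P := by rw [hVnT, hnTV]
        _ = nT * (V * P) := by rw [mul_assoc]
      have e3 := congrArg (fun X => iT * X) e2
      simpa only [cIN] using e3
    set E : H →L[ℂ] H := (2⁻¹ : ℂ) • (1 - V) with hE_def
    have hEsa : star E = E := by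
      rw [hE_def, star_smul, star_sub, star_one, hVsa]
      congr 1
      simp
    have hG2 : (1 - V) * (1 - V) = (2 : ℂ) • (1 - V) := by
      rw [sub_mul, mul_sub, mul_sub, hV2]
      simp only [one_mul, mul_one]
      module
    have hE2 : E * E = E := by
      rw [hE_def, smul_mul_smul_comm, hG2, smul_smul]
      norm_num
    have hEnT : nT * E = E * nT := by
      rw [hE_def, mul_smul_comm, smul_mul_assoc]
      congr 1
      rw [mul_sub, sub_mul, mul_one, one_mul, hnTV, hVnT]
    have hEP : P * E = E * P := by
      rw [hE_def, mul_smul_comm, smul_mul_assoc]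
      congr 1
      rw [mul_sub, sub_mul, mul_one, one_mul, hPV]
    have hEV : E * V = -E := by
      rw [hE_def, smul_mul_assoc, sub_mul, one_mul, hV2, ← neg_sub, smul_neg]
    have hFpos : 0 ≤ E * ((nT * P) * E) := by
      have h := star_left_conjugate_nonneg h0 E
      rwa [hEsa, mul_assoc] at h
    have hFneg : E * ((nT * P) * E) ≤ 0 := by
      have h := star_left_conjugate_nonneg hJP0 E
      rw [hEsa, ← eVR] at h
      have e : E * ((V * (nT * P)) * E) = -(E * ((nT * P) * E)) := by
        calc E * ((V * (nT * P)) * E) = (E * V) * ((nT * P) * E) := by simp only [mul_assoc]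
        _ = -(E * ((nT * P) * E)) := by rw [hEV, neg_mul]
      rw [mul_assoc, e] at h
      exact neg_nonneg.mp h
    have hF : E * ((nT * P) * E) = 0 := le_antisymm hFneg hFpos
    have hPEnT : nT * (P * E) = 0 := by
      calc nT * (P * E) = nT * (P * (E * E)) := by rw [hE2]
      _ = (nT * E) * (P * E) := by rw [← mul_assoc P E E, hEP]; simp only [mul_assoc]; rw [hEP]
      _ = (E * nT) * (P * E) := by rw [hEnT]
      _ = E * ((nT * P) * E) := by simp only [mul_assoc]
      _ = 0 := hF
    have hPE0 : P * E = 0 := by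
      have h := congrArg (fun X => iT * X) hPEnT
      simpa only [cIN, mul_zero] using h
    have hET : E * T = -E := by
      rw [hT_def, mul_sub, mul_smul_comm, ← hEP, hPE0, smul_zero, mul_one, zero_sub]
    have hJV : V * (nT * T) = J := by
      rw [hV_def, mul_assoc, cIN, hA_def, mul_assoc, h1, mul_one]
    have hV1 : V - 1 = -((2 : ℂ) • E) := by
      rw [hE_def, smul_smul]
      norm_num
    have hnTE0 : 0 ≤ nT * E := by
      have h := star_left_conjugate_nonneg hnT0 E
      rw [hEsa, ← hEnT, mul_assoc, hE2] at h
      exact h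
    have e4 : (V - 1) * (nT * T) = J - T * iT := by
      rw [sub_mul, one_mul, hJV, ← hkey]
    have hfinal : J - T * iT = nT * E + nT * E := by
      rw [← e4, hV1, neg_mul, smul_mul_assoc]
      have e5 : E * (nT * T) = -(nT * E) := by
        rw [← mul_assoc, ← hEnT, mul_assoc, hET, mul_neg]
      rw [e5, smul_neg, neg_neg, two_smul]
    rw [← nonneg_iff_isPositive, hfinal]
    exact add_nonneg hnTE0 hnTE0
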